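/- Let R = k[S] be a Cohen–Macaulay pointed affine semigroup ring whose canonical module is isomorphic to a monomial ideal I_R of R, and let V = V_{ω_R} ⊆ S be the exponent set of the minimal monomial generators of I_R. Then R is nearly Gorenstein if and only if for every minimal generator a of S there exist v ∈ V and u ∈ ℤS with u + w ∈ S for all w ∈ V, such that a = u + v. -/

import Mathlib

noncomputable section

/-- The trace ideal of a module. -/
def traceIdeal (R : Type*) [CommRing R] (M : Type*) [AddCommGroup M] [Module R M] :
    Ideal R :=
  ⨆ φ : M →ₗ[R] R, LinearMap.range φ

namespace NearlyGorAux

open Finsupp AddMonoidAlgebra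

variable {d : ℕ}

/-! ### Combinatorial lemmas about pointed finitely generated affine semigroups -/

section Combinatorics

variable {S : AddSubmonoid (Fin d → ℤ)}

/-- The "vector to element" map for a finite generating set. -/
def pivec (G : Finset (Fin d → ℤ)) (c : {x // x ∈ G} → ℕ) : Fin d → ℤ :=
  ∑ g : {x // x ∈ G}, c g • (g : Fin d → ℤ)

lemma pivec_add (G : Finset (Fin d → ℤ)) (c c' : {x // x ∈ G} → ℕ) :
    pivec G (c + c') = pivec G c + pivec G c' := by
  simp only [pivec, Pi.add_apply, add_nsmul]
  exact Finset.sum_add_distrib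

lemma pivec_mem {G : Finset (Fin d → ℤ)}
    (hG : AddSubmonoid.closure (G : Set (Fin d → ℤ)) = S)
    (c : {x // x ∈ G} → ℕ) : pivec G c ∈ S := by
  refine AddSubmonoid.sum_mem _ fun g _ => ?_
  have hg : (g : Fin d → ℤ) ∈ S := by
    rw [← hG]; exact AddSubmonoid.subset_closure g.2
  exact AddSubmonoid.nsmul_mem (S := S) hg _

lemma exists_pivec_rep {G : Finset (Fin d → ℤ)}
    (hG : AddSubmonoid.closure (G : Set (Fin d → ℤ)) = S)
    {t : Fin d → ℤ} (ht : t ∈ S) :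
    ∃ c : {x // x ∈ G} → ℕ, pivec G c = t := by
  classical
  obtain ⟨l, hl, hsum⟩ := AddSubmonoid.exists_multiset_of_mem_closure (hG ▸ ht)
  refine ⟨fun g => l.count (g : Fin d → ℤ), ?_⟩
  have h1 : pivec G (fun g => l.count (g : Fin d → ℤ))
      = ∑ a ∈ G, l.count a • a := by
    rw [pivec, Finset.univ_eq_attach, Finset.sum_attach G (fun a => l.count a • a)]
  have h2 : ∑ a ∈ G, l.count a • a = ∑ a ∈ l.toFinset, l.count a • a := by
    refine (Finset.sum_subset ?_ ?_).symm
    · intro a ha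
      exact hl a (Multiset.mem_toFinset.mp ha)
    · intro a _ ha
      rw [Multiset.count_eq_zero_of_notMem (fun h => ha (Multiset.mem_toFinset.mpr h)),
        zero_smul]
  have h3 : l.sum = ∑ a ∈ l.toFinset, l.count a • a := by
    have h4 := congrArg Multiset.sum (Multiset.toFinset_sum_count_nsmul_eq l)
    rw [Multiset.sum_sum] at h4
    rw [← h4]
    refine Finset.sum_congr rfl fun a _ => ?_
    rw [Multiset.sum_nsmul, Multiset.sum_singleton]
  rw [h1, h2, ← h3, hsum]

/-- Finiteness of the set of "divisors" of an element, via Dickson's lemma. -/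
lemma divisors_finite (hfg : ∃ G : Finset (Fin d → ℤ),
      AddSubmonoid.closure (G : Set (Fin d → ℤ)) = S)
    (hpointed : ∀ a ∈ S, -a ∈ S → a = 0) (s : Fin d → ℤ) :
    {t : Fin d → ℤ | t ∈ S ∧ s - t ∈ S}.Finite := by
  obtain ⟨G, hG⟩ := hfg
  by_contra hinf
  set f := Set.Infinite.natEmbedding _ hinf with hf
  choose c hc using fun n => exists_pivec_rep hG (f n).2.1
  choose e he using fun n => exists_pivec_rep hG (f n).2.2
  have hpwo : @WellQuasiOrdered (({x // x ∈ G} ⊕ {x // x ∈ G}) → ℕ) (· ≤ ·) :=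
    wellQuasiOrdered_le
  obtain ⟨m, n, hmn, hle⟩ := hpwo (fun n => Sum.elim (c n) (e n))
  have hcle : ∀ g, c m g ≤ c n g := fun g => hle (Sum.inl g)
  have hele : ∀ g, e m g ≤ e n g := fun g => hle (Sum.inr g)
  have hc1 : pivec G (c n) = pivec G (c m) + pivec G (fun g => c n g - c m g) := by
    have harg : c n = c m + (fun g => c n g - c m g) := by
      funext g
      exact (Nat.add_sub_cancel' (hcle g)).symm
    have h := pivec_add G (c m) (fun g => c n g - c m g)
    rw [← harg] at h
    exact h
  have he1 : pivec G (e n) = pivec G (e m) + pivec G (fun g => e n g - e m g) := by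
    have harg : e n = e m + (fun g => e n g - e m g) := by
      funext g
      exact (Nat.add_sub_cancel' (hele g)).symm
    have h := pivec_add G (e m) (fun g => e n g - e m g)
    rw [← harg] at h
    exact h
  set w := pivec G (fun g => c n g - c m g) with hw
  set w' := pivec G (fun g => e n g - e m g) with hw'
  have hwS : w ∈ S := pivec_mem hG _
  have hw'S : w' ∈ S := pivec_mem hG _
  have h2 : ((f n : Fin d → ℤ)) = ((f m : Fin d → ℤ)) + w := by
    rw [← hc n, hc1, hc m]
  have h3 : s - ((f n : Fin d → ℤ)) = (s - ((f m : Fin d → ℤ))) + w' := by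
    rw [← he n, he1, he m]
  have h4 : w' = -w := by linear_combination -h2 - h3
  have h5 : w = 0 := hpointed w hwS (by rw [← h4]; exact hw'S)
  have h6 : f m = f n := Subtype.ext (by rw [h2, h5, add_zero])
  exact absurd (f.injective h6) (by omega)

/-- Every nonzero element of a pointed f.g. affine semigroup is a nonempty sum of
irreducible elements. -/
lemma exists_irred_decomp (hfg : ∃ G : Finset (Fin d → ℤ),
      AddSubmonoid.closure (G : Set (Fin d → ℤ)) = S)
    (hpointed : ∀ a ∈ S, -a ∈ S → a = 0) :
    ∀ s, s ∈ S → s ≠ 0 →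
      ∃ l : List (Fin d → ℤ), l ≠ [] ∧
        (∀ a ∈ l, a ∈ S ∧ a ≠ 0 ∧ ∀ b ∈ S, ∀ c ∈ S, a = b + c → b = 0 ∨ c = 0) ∧
        l.sum = s := by
  suffices H : ∀ n : ℕ, ∀ s, s ∈ S → s ≠ 0 →
      {t : Fin d → ℤ | t ∈ S ∧ s - t ∈ S}.ncard ≤ n →
      ∃ l : List (Fin d → ℤ), l ≠ [] ∧
        (∀ a ∈ l, a ∈ S ∧ a ≠ 0 ∧ ∀ b ∈ S, ∀ c ∈ S, a = b + c → b = 0 ∨ c = 0) ∧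
        l.sum = s by
    exact fun s hs hs0 => H _ s hs hs0 le_rfl
  intro n
  induction n with
  | zero =>
    intro s hs hs0 hcard
    exfalso
    have hfin := divisors_finite hfg hpointed s
    have hmem : s ∈ {t : Fin d → ℤ | t ∈ S ∧ s - t ∈ S} := ⟨hs, by rw [sub_self]; exact S.zero_mem⟩
    have := Set.ncard_pos hfin |>.mpr ⟨s, hmem⟩
    omega
  | succ n ih =>
    intro s hs hs0 hcard
    by_cases hirr : ∀ b ∈ S, ∀ c ∈ S, s = b + c → b = 0 ∨ c = 0
    · exact ⟨[s], by simp, by simpa using ⟨hs, hs0, hirr⟩, by simp⟩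
    · push_neg at hirr
      obtain ⟨b, hb, c, hc, heq, hb0, hc0⟩ := hirr
      have hfin := divisors_finite hfg hpointed s
      have hsub : ∀ x ∈ S, x + (s - x) ∈ S → ∀ y, y ∈ S → x - y ∈ S →
          True := fun _ _ _ _ _ _ => trivial
      -- divisors of b form a strict subset of divisors of s,
      -- and similarly for c
      have key : ∀ p q : Fin d → ℤ, p ∈ S → q ∈ S → q ≠ 0 → s = p + q →
          {t : Fin d → ℤ | t ∈ S ∧ p - t ∈ S}.ncard ≤ n := by
        intro p q hp hq hq0 hpq
        have hss : {t : Fin d → ℤ | t ∈ S ∧ p - t ∈ S} ⊂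
            {t : Fin d → ℤ | t ∈ S ∧ s - t ∈ S} := by
          constructor
          · rintro t ⟨ht, hpt⟩
            refine ⟨ht, ?_⟩
            have : s - t = (p - t) + q := by rw [hpq]; ring
            rw [this]
            exact S.add_mem hpt hq
          · intro hle
            have hsmem : s ∈ {t : Fin d → ℤ | t ∈ S ∧ p - t ∈ S} :=
              hle ⟨hs, by rw [sub_self]; exact S.zero_mem⟩
            have : p - s = -q := by rw [hpq]; ring
            have hq' : -q ∈ S := this ▸ hsmem.2
            exact hq0 (hpointed q hq hq')
        have := Set.ncard_lt_ncard hss hfin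
        omega
      obtain ⟨lb, hlbne, hlb, hlbsum⟩ := ih b hb hb0 (key b c hb hc hc0 heq)
      obtain ⟨lc, hlcne, hlc, hlcsum⟩ := ih c hc hc0
        (key c b hc hb hb0 (by rw [heq]; ring))
      refine ⟨lb ++ lc, by simp [hlbne], ?_, by rw [List.sum_append, hlbsum, hlcsum, heq]⟩
      intro a ha
      rcases List.mem_append.mp ha with h | h
      · exact hlb a h
      · exact hlc a h

/-- An irreducible element lies in every generating set. -/
lemma irred_mem_gen {a : Fin d → ℤ} (haS : a ∈ S) (ha0 : a ≠ 0)
    (hirr : ∀ b ∈ S, ∀ c ∈ S, a = b + c → b = 0 ∨ c = 0)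
    (X : Set (Fin d → ℤ)) (hX : AddSubmonoid.closure X = S) : a ∈ X := by
  have : a ∈ AddSubmonoid.closure X := hX ▸ haS
  obtain ⟨l, hl, hsum⟩ := AddSubmonoid.exists_list_of_mem_closure this
  clear this haS
  induction l with
  | nil => exact absurd hsum.symm (by simpa using ha0)
  | cons x t iht =>
    have hxX : x ∈ X := hl x (by simp)
    have hxS : x ∈ S := hX ▸ AddSubmonoid.subset_closure hxX
    have htS : t.sum ∈ S := by
      rw [← hX]
      exact AddSubmonoid.list_sum_mem _ fun y hy =>
        AddSubmonoid.subset_closure (hl y (List.mem_cons_of_mem _ hy))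
    rw [List.sum_cons] at hsum
    rcases hirr x hxS t.sum htS hsum.symm with h0 | h0
    · exact iht (fun y hy => hl y (List.mem_cons_of_mem _ hy))
        (by rw [← hsum, h0, zero_add])
    · rw [h0, add_zero] at hsum
      exact hsum ▸ hxX

end Combinatorics

/-! ### The embedding of `k[S]` into the group algebra `k[ℤ^d]` -/

section Algebra

variable (k : Type*) [Field k] (S : AddSubmonoid (Fin d → ℤ))

/-- The canonical embedding `k[S] → k[ℤ^d]`. -/
def iota : AddMonoidAlgebra k S →+* AddMonoidAlgebra k (Fin d → ℤ) :=
  AddMonoidAlgebra.mapDomainRingHom k S.subtype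

lemma iota_apply (x : AddMonoidAlgebra k S) :
    iota k S x = AddMonoidAlgebra.mapDomain (Subtype.val : S → (Fin d → ℤ)) x := rfl

lemma iota_injective : Function.Injective (iota k S) := by
  intro x y h
  exact AddMonoidAlgebra.mapDomain_injective Subtype.coe_injective h

lemma iota_single (s : S) (c : k) :
    iota k S (AddMonoidAlgebra.single s c)
      = AddMonoidAlgebra.single (s : Fin d → ℤ) c := by
  rw [iota_apply]
  exact AddMonoidAlgebra.mapDomain_single

lemma iota_apply_coe (x : AddMonoidAlgebra k S) (s : S) :
    (iota k S x).coeff (s : Fin d → ℤ) = x.coeff s := by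
  rw [iota_apply]
  exact Finsupp.mapDomain_apply Subtype.coe_injective x.coeff s

lemma iota_apply_notmem (x : AddMonoidAlgebra k S) {b : Fin d → ℤ} (hb : b ∉ S) :
    (iota k S x).coeff b = 0 := by
  rw [iota_apply]
  refine Finsupp.mapDomain_notin_range (f := Subtype.val) x.coeff _ ?_
  rintro ⟨s, rfl⟩
  exact hb s.2

lemma iota_support_mem (x : AddMonoidAlgebra k S) :
    ∀ b ∈ (iota k S x).coeff.support, b ∈ S := by
  intro b hb
  by_contra h
  rw [Finsupp.mem_support_iff, iota_apply_notmem k S x h] at hb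
  exact hb rfl

/-- The "division by `x^(-u)`" map: shift supports by `u` and corestrict to `S`. -/
def sigmaMap (u : Fin d → ℤ) :
    AddMonoidAlgebra k (Fin d → ℤ) →+ AddMonoidAlgebra k S :=
  AddMonoidAlgebra.comapDomainAddMonoidHom (f := fun s : S => (s : Fin d → ℤ) - u)
    (fun s t h => Subtype.ext (by
      have := congrArg (· + u) h
      simpa using this))

lemma sigmaMap_apply (u : Fin d → ℤ) (f : AddMonoidAlgebra k (Fin d → ℤ)) (s : S) :
    (sigmaMap k S u f).coeff s = f.coeff ((s : Fin d → ℤ) - u) := rfl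

lemma iota_sigmaMap (u : Fin d → ℤ) (f : AddMonoidAlgebra k (Fin d → ℤ))
    (hf : ∀ b ∈ f.coeff.support, u + b ∈ S) :
    iota k S (sigmaMap k S u f) = AddMonoidAlgebra.single u (1 : k) * f := by
  ext c
  rw [AddMonoidAlgebra.coeff_single_mul_apply, one_mul]
  by_cases hc : c ∈ S
  · have : c = ((⟨c, hc⟩ : S) : Fin d → ℤ) := rfl
    rw [this, iota_apply_coe, sigmaMap_apply]
    congr 1
    abel
  · rw [iota_apply_notmem k S _ hc]
    by_contra h
    have hmem : -u + c ∈ f.coeff.support := Finsupp.mem_support_iff.mpr fun h' => h h'.symm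
    have := hf _ hmem
    rw [show u + (-u + c) = c by abel] at this
    exact hc this

end Algebra

section Trace

variable (k : Type*) [Field k] (S : AddSubmonoid (Fin d → ℤ))

/-- Support of elements of the monomial ideal. -/
lemma support_of_mem_span (V : Finset (Fin d → ℤ)) {x : AddMonoidAlgebra k S}
    (hx : x ∈ Ideal.span {f : AddMonoidAlgebra k S | ∃ v : S, (v : Fin d → ℤ) ∈ V ∧
      f = AddMonoidAlgebra.single v (1 : k)}) :
    ∀ b ∈ (iota k S x).coeff.support, ∃ v ∈ V, ∃ s ∈ S, b = v + s := by
  classical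
  refine Submodule.span_induction ?_ ?_ ?_ ?_ hx
  · rintro f ⟨v, hv, rfl⟩ b hb
    rw [iota_single, AddMonoidAlgebra.coeff_single] at hb
    have := Finsupp.support_single_subset hb
    rw [Finset.mem_singleton] at this
    exact ⟨v, hv, 0, S.zero_mem, by rw [this, add_zero]⟩
  · intro b hb
    rw [map_zero] at hb
    simp at hb
  · intro x y _ _ hx hy b hb
    rw [map_add, AddMonoidAlgebra.coeff_add] at hb
    rcases Finset.mem_union.mp (Finsupp.support_add hb) with h | h
    · exact hx b h
    · exact hy b h
  · intro r x _ hx b hb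
    rw [smul_eq_mul, map_mul] at hb
    obtain ⟨c, hc, b', hb', rfl⟩ := Finset.mem_add.mp (AddMonoidAlgebra.support_coeff_mul_subset _ _ hb)
    obtain ⟨v, hv, s, hs, rfl⟩ := hx b' hb'
    exact ⟨v, hv, s + c, S.add_mem hs (iota_support_mem k S r c hc), by abel⟩

/-- Membership in the trace ideal coming from a combinatorial witness. -/
lemma single_mem_trace (I : Ideal (AddMonoidAlgebra k S)) (u : Fin d → ℤ)
    (hsupp : ∀ y ∈ I, ∀ b ∈ (iota k S y).coeff.support, u + b ∈ S)
    {v₀ : S} (hv₀ : AddMonoidAlgebra.single v₀ (1 : k) ∈ I)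
    {a : S} (ha : (a : Fin d → ℤ) = u + (v₀ : Fin d → ℤ)) :
    AddMonoidAlgebra.single a (1 : k) ∈ traceIdeal (AddMonoidAlgebra k S) I := by
  have key : ∀ y : I, iota k S (sigmaMap k S u (iota k S (y : AddMonoidAlgebra k S)))
      = AddMonoidAlgebra.single u (1 : k) * iota k S (y : AddMonoidAlgebra k S) :=
    fun y => iota_sigmaMap k S u _ (hsupp _ y.2)
  set φ : I →ₗ[AddMonoidAlgebra k S] AddMonoidAlgebra k S :=
    { toFun := fun y => sigmaMap k S u (iota k S (y : AddMonoidAlgebra k S))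
      map_add' := by
        intro y z
        simp only [Submodule.coe_add, map_add]
      map_smul' := by
        intro r y
        simp only [RingHom.id_apply]
        apply iota_injective k S
        have h1 : ((r • y : I) : AddMonoidAlgebra k S) = r * (y : AddMonoidAlgebra k S) := rfl
        show iota k S (sigmaMap k S u (iota k S ((r • y : I) : AddMonoidAlgebra k S)))
          = iota k S (r • sigmaMap k S u (iota k S (y : AddMonoidAlgebra k S)))
        rw [key (r • y), h1, map_mul, mul_left_comm, ← key y, smul_eq_mul, map_mul] } with hφ
  have hval : AddMonoidAlgebra.single a (1 : k) = φ ⟨_, hv₀⟩ := by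
    apply iota_injective k S
    have : iota k S (φ ⟨_, hv₀⟩)
        = AddMonoidAlgebra.single u (1 : k) * iota k S (AddMonoidAlgebra.single v₀ (1 : k)) :=
      key ⟨_, hv₀⟩
    rw [this, iota_single, iota_single, AddMonoidAlgebra.single_mul_single, one_mul, ha]
  rw [hval]
  have hle : LinearMap.range φ ≤ traceIdeal (AddMonoidAlgebra k S) I :=
    le_iSup (fun ψ : I →ₗ[AddMonoidAlgebra k S] AddMonoidAlgebra k S => LinearMap.range ψ) φ
  exact hle (LinearMap.mem_range_self φ _)

end Trace

end NearlyGorAux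

open NearlyGorAux

/-- Corollary 3.2: let `R = k[S]` be a Cohen–Macaulay pointed affine semigroup ring whose
canonical module is (isomorphic to) the monomial ideal `I` with minimal monomial
generators `x^v`, `v ∈ V`.  Then `R` is nearly Gorenstein (`m ⊆ tr(ω_R) = tr(I)`) iff
every minimal generator `a` of `S` can be written as `a = u + v` with `v ∈ V` and
`u ∈ ℤS` satisfying `u + w ∈ S` for all `w ∈ V`. -/
theorem nearlyGorenstein_iff {d : ℕ} (k : Type*) [Field k]
    (S : AddSubmonoid (Fin d → ℤ))
    (hfg : ∃ G : Finset (Fin d → ℤ), AddSubmonoid.closure (G : Set (Fin d → ℤ)) = S)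
    (hpointed : ∀ a ∈ S, -a ∈ S → a = 0)
    (V : Finset (Fin d → ℤ)) (hVS : (V : Set (Fin d → ℤ)) ⊆ S) (hVne : V.Nonempty)
    -- the monomial (canonical) ideal `I` with minimal monomial generating set `V`
    (I : Ideal (AddMonoidAlgebra k S))
    (hI : I = Ideal.span
      {f : AddMonoidAlgebra k S | ∃ v : S, (v : Fin d → ℤ) ∈ V ∧
        f = AddMonoidAlgebra.single v (1 : k)})
    (hminV : ∀ v ∈ V, ∀ w ∈ V, v ≠ w → v - w ∉ S)
    -- the graded maximal ideal `m` of `R = k[S]`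
    (m : Ideal (AddMonoidAlgebra k S))
    (hm : m = Ideal.span
      {f : AddMonoidAlgebra k S | ∃ s : S, (s : Fin d → ℤ) ≠ 0 ∧
        f = AddMonoidAlgebra.single s (1 : k)})
    -- `R` is Cohen–Macaulay: there is a regular sequence in `m` of length `dim R`
    (hCM : ∃ rs : List (AddMonoidAlgebra k S), RingTheory.Sequence.IsRegular (AddMonoidAlgebra k S) rs ∧
      (∀ r ∈ rs, r ∈ m) ∧ (rs.length : WithBot ℕ∞) = ringKrullDim (AddMonoidAlgebra k S)) :
    m ≤ traceIdeal (AddMonoidAlgebra k S) I ↔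
      ∀ a : Fin d → ℤ, a ∈ S → (∀ X : Set (Fin d → ℤ), AddSubmonoid.closure X = S → a ∈ X) →
        ∃ v ∈ V, ∃ u ∈ AddSubgroup.closure (S : Set (Fin d → ℤ)),
          (∀ w ∈ V, u + w ∈ S) ∧ a = u + v := by
  classical
  constructor
  · -- nearly Gorenstein implies the combinatorial condition
    intro hle a haS hgen
    obtain ⟨v₀, hv₀⟩ := hVne
    have hv₀S : v₀ ∈ S := hVS hv₀
    set vs : S := ⟨v₀, hv₀S⟩ with hvs
    have ha0 : a ≠ 0 := by
      have hcl : AddSubmonoid.closure ((S : Set (Fin d → ℤ)) \ {0}) = S := by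
        apply le_antisymm
        · rw [AddSubmonoid.closure_le]
          exact fun x hx => hx.1
        · intro x hx
          by_cases hx0 : x = (0 : Fin d → ℤ)
          · rw [hx0]; exact zero_mem _
          · exact AddSubmonoid.subset_closure ⟨hx, hx0⟩
      exact fun h => (hgen _ hcl).2 (Set.mem_singleton_iff.mpr h)
    set D : Set (Fin d → ℤ) := {b | ∃ v ∈ V, ∃ u ∈ AddSubgroup.closure (S : Set (Fin d → ℤ)),
      (∀ w ∈ V, u + w ∈ S) ∧ b = u + v} with hD
    set J : Ideal (AddMonoidAlgebra k S) :=
      { carrier := {x | ∀ b ∈ (iota k S x).coeff.support, b ∈ D}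
        add_mem' := by
          intro x y hx hy b hb
          rw [map_add, AddMonoidAlgebra.coeff_add] at hb
          rcases Finset.mem_union.mp (Finsupp.support_add hb) with h | h
          exacts [hx b h, hy b h]
        zero_mem' := by
          intro b hb
          rw [map_zero] at hb
          simp at hb
        smul_mem' := by
          intro r x hx b hb
          rw [smul_eq_mul, map_mul] at hb
          obtain ⟨c, hc, b', hb', heq⟩ := Finset.mem_add.mp
            (AddMonoidAlgebra.support_coeff_mul_subset _ _ hb)
          obtain ⟨v, hv, u, hu, huV, hb'eq⟩ := hx b' hb'
          refine ⟨v, hv, u + c, ?_, ?_, ?_⟩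
          · exact AddSubgroup.add_mem _ hu
              (AddSubgroup.subset_closure (iota_support_mem k S r c hc))
          · intro w hw
            have h1 := S.add_mem (huV w hw) (iota_support_mem k S r c hc)
            rwa [show u + w + c = u + c + w by abel] at h1
          · rw [← heq, hb'eq]; abel } with hJ
    have htr : traceIdeal (AddMonoidAlgebra k S) I ≤ J := by
      unfold traceIdeal
      refine iSup_le fun φ => ?_
      intro x hx
      obtain ⟨y, rfl⟩ := LinearMap.mem_range.mp hx
      set x₀ : I := ⟨AddMonoidAlgebra.single vs (1 : k),
        hI ▸ Ideal.subset_span ⟨vs, hv₀, rfl⟩⟩ with hx₀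
      have L1 : ∀ z : I, AddMonoidAlgebra.single vs (1 : k) * φ z
          = (z : AddMonoidAlgebra k S) * φ x₀ := by
        intro z
        have h1 : (AddMonoidAlgebra.single vs (1 : k)) • z
            = ((z : AddMonoidAlgebra k S)) • x₀ := by
          apply Subtype.ext
          show AddMonoidAlgebra.single vs 1 * (z : AddMonoidAlgebra k S)
            = (z : AddMonoidAlgebra k S) * AddMonoidAlgebra.single vs 1
          exact mul_comm _ _
        have h2 := φ.map_smul (AddMonoidAlgebra.single vs (1 : k)) z
        have h3 := φ.map_smul ((z : AddMonoidAlgebra k S)) x₀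
        rw [h1] at h2
        have h4 : (AddMonoidAlgebra.single vs (1 : k)) • φ z
            = ((z : AddMonoidAlgebra k S)) • φ x₀ := by rw [← h2, h3]
        simpa [smul_eq_mul] using h4
      set q := AddMonoidAlgebra.single (-(vs : Fin d → ℤ)) (1 : k)
        * iota k S ((φ x₀ : AddMonoidAlgebra k S)) with hq
      have L2 : ∀ z : I, iota k S (φ z) = q * iota k S ((z : AddMonoidAlgebra k S)) := by
        intro z
        have h5 := congrArg (iota k S) (L1 z)
        rw [map_mul, map_mul, iota_single] at h5
        have h6 : q * iota k S ((z : AddMonoidAlgebra k S))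
            = AddMonoidAlgebra.single (-(vs : Fin d → ℤ)) (1 : k)
              * (AddMonoidAlgebra.single ((vs : Fin d → ℤ)) (1 : k) * iota k S (φ z)) := by
          rw [hq, mul_assoc, mul_comm (iota k S ((φ x₀ : AddMonoidAlgebra k S))) _, ← h5]
        rw [h6, ← mul_assoc, AddMonoidAlgebra.single_mul_single, neg_add_cancel, one_mul,
          ← AddMonoidAlgebra.one_def, one_mul]
      have L3 : ∀ u' ∈ q.coeff.support,
          u' ∈ AddSubgroup.closure (S : Set (Fin d → ℤ)) ∧ ∀ w ∈ V, u' + w ∈ S := by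
        intro u' hu'
        have hw' : ∀ w ∈ V, u' + w ∈ S := by
          intro w hw
          set zw : I := ⟨AddMonoidAlgebra.single (⟨w, hVS hw⟩ : S) (1 : k),
            hI ▸ Ideal.subset_span ⟨⟨w, hVS hw⟩, hw, rfl⟩⟩ with hzw
          have h7 : iota k S (φ zw) = q * AddMonoidAlgebra.single w (1 : k) := by
            rw [L2 zw,
              show ((zw : AddMonoidAlgebra k S)) = AddMonoidAlgebra.single (⟨w, hVS hw⟩ : S) 1
                from rfl,
              iota_single]
          have h8 : (q * AddMonoidAlgebra.single w (1 : k)).coeff (u' + w) ≠ 0 := by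
            rw [AddMonoidAlgebra.coeff_mul_single_add, mul_one]
            exact Finsupp.mem_support_iff.mp hu'
          have h9 : u' + w ∈ (iota k S (φ zw)).coeff.support := by
            rw [h7]
            exact Finsupp.mem_support_iff.mpr h8
          exact iota_support_mem k S _ _ h9
        refine ⟨?_, hw'⟩
        have h10 : u' + v₀ ∈ S := hw' v₀ hv₀
        have h11 : u' = (u' + v₀) - v₀ := by abel
        rw [h11]
        exact AddSubgroup.sub_mem _ (AddSubgroup.subset_closure h10)
          (AddSubgroup.subset_closure hv₀S)
      show ∀ b ∈ (iota k S ((φ y : AddMonoidAlgebra k S))).coeff.support, b ∈ D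
      intro b hb
      rw [L2 y] at hb
      obtain ⟨u', hu', b', hb', heq⟩ := Finset.mem_add.mp
        (AddMonoidAlgebra.support_coeff_mul_subset _ _ hb)
      obtain ⟨v, hv, s', hs', hb'eq⟩ := support_of_mem_span k S V (hI ▸ y.2) b' hb'
      obtain ⟨huZ, huV⟩ := L3 u' hu'
      refine ⟨v, hv, u' + s',
        AddSubgroup.add_mem _ huZ (AddSubgroup.subset_closure hs'), ?_, ?_⟩
      · intro w hw
        have h12 := S.add_mem (huV w hw) hs'
        rwa [show u' + w + s' = u' + s' + w by abel] at h12
      · rw [← heq, hb'eq]; abel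
    have hsingle : AddMonoidAlgebra.single (⟨a, haS⟩ : S) (1 : k) ∈ m := by
      rw [hm]
      exact Ideal.subset_span ⟨⟨a, haS⟩, ha0, rfl⟩
    have hmemJ := htr (hle hsingle)
    have ha_supp : a ∈ (iota k S (AddMonoidAlgebra.single (⟨a, haS⟩ : S) (1 : k))).coeff.support := by
      rw [iota_single, AddMonoidAlgebra.coeff_single, Finsupp.support_single_ne_zero _ one_ne_zero]
      exact Finset.mem_singleton.mpr rfl
    exact hmemJ a ha_supp
  · -- the combinatorial condition implies nearly Gorenstein
    intro hcomb
    rw [hm, Ideal.span_le]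
    rintro f ⟨s, hs0, rfl⟩
    obtain ⟨l, hlne, hlirr, hlsum⟩ := exists_irred_decomp hfg hpointed (s : Fin d → ℤ) s.2 hs0
    suffices H : ∀ l : List (Fin d → ℤ), l ≠ [] →
        (∀ a ∈ l, a ∈ S ∧ a ≠ 0 ∧ ∀ b ∈ S, ∀ c ∈ S, a = b + c → b = 0 ∨ c = 0) →
        ∀ t : S, (t : Fin d → ℤ) = l.sum →
        AddMonoidAlgebra.single t (1 : k) ∈ traceIdeal (AddMonoidAlgebra k S) I by
      exact H l hlne hlirr s hlsum.symm
    intro l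
    induction l with
    | nil => intro h; exact absurd rfl h
    | cons a tl ih =>
      intro _ hirr t ht
      obtain ⟨haS, ha0, hairr⟩ := hirr a List.mem_cons_self
      obtain ⟨v, hv, u, huZ, huV, hau⟩ := hcomb a haS
        (fun X hX => irred_mem_gen haS ha0 hairr X hX)
      have hv₀ : AddMonoidAlgebra.single (⟨v, hVS hv⟩ : S) (1 : k) ∈ I :=
        hI ▸ Ideal.subset_span ⟨⟨v, hVS hv⟩, hv, rfl⟩
      have hsupp : ∀ y ∈ I, ∀ b ∈ (iota k S y).coeff.support, u + b ∈ S := by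
        intro y hy b hb
        obtain ⟨v', hv', s', hs', rfl⟩ := support_of_mem_span k S V (hI ▸ hy) b hb
        have h1 := S.add_mem (huV v' hv') hs'
        rwa [show u + v' + s' = u + (v' + s') by abel] at h1
      have hamem : AddMonoidAlgebra.single (⟨a, haS⟩ : S) (1 : k)
          ∈ traceIdeal (AddMonoidAlgebra k S) I :=
        single_mem_trace k S I u hsupp hv₀ hau
      rcases eq_or_ne tl [] with h | h
      · subst h
        have ht' : t = (⟨a, haS⟩ : S) :=
          Subtype.ext (by rw [ht, List.sum_cons, List.sum_nil, add_zero])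
        rw [ht']
        exact hamem
      · have htlS : tl.sum ∈ S :=
          AddSubmonoid.list_sum_mem _ fun y hy => (hirr y (List.mem_cons_of_mem _ hy)).1
        have hstep := ih h (fun y hy => hirr y (List.mem_cons_of_mem _ hy)) ⟨tl.sum, htlS⟩ rfl
        have ht' : t = (⟨a, haS⟩ : S) + (⟨tl.sum, htlS⟩ : S) :=
          Subtype.ext (by rw [ht, List.sum_cons]; rfl)
        have hsplit : AddMonoidAlgebra.single t (1 : k)
            = AddMonoidAlgebra.single (⟨a, haS⟩ : S) (1 : k)
              * AddMonoidAlgebra.single (⟨tl.sum, htlS⟩ : S) (1 : k) := by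
          rw [AddMonoidAlgebra.single_mul_single, one_mul, ht']
        rw [hsplit]
        exact Ideal.mul_mem_right _ _ hamem
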